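/- With S, a, L_k as above, for each k ≥ 0 the element k•a belongs to L_k, and S + k•a equals the disjoint union of L_m over m ≥ k. -/

import Mathlib

theorem stmt_7 (d r : ℕ) (S : AddSubmonoid (Fin d → ℤ)) (e : Fin r → (Fin d → ℤ))
    (hgen : S = AddSubmonoid.closure (Set.range e))
    (hgrp : ∀ x : Fin d → ℤ, ∃ s ∈ S, ∃ t ∈ S, x = s - t)
    (hne : (S : Set (Fin d → ℤ)) ≠ Set.univ)
    (a : Fin d → ℤ) (ha : a = ∑ i, e i)
    (L : ℕ → Set (Fin d → ℤ))
    (hL : ∀ k : ℕ, L k = (fun s => s + k • a) '' (S : Set (Fin d → ℤ)) \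
        (fun s => s + (k + 1) • a) '' (S : Set (Fin d → ℤ))) :
    Pairwise (Function.onFun Disjoint L) ∧
    ∀ k : ℕ, k • a ∈ L k ∧
      (fun s => s + k • a) '' (S : Set (Fin d → ℤ)) = ⋃ m ∈ {m : ℕ | k ≤ m}, L m := by
  have hea : ∀ i, e i ∈ S := by
    intro i; rw [hgen]; exact AddSubmonoid.subset_closure ⟨i, rfl⟩
  have haS : a ∈ S := by
    rw [ha]; exact AddSubmonoid.sum_mem _ (fun i _ => hea i)
  have haei : ∀ i : Fin r, a - e i ∈ S := by
    intro i
    have h : a - e i = ∑ j ∈ Finset.univ.erase i, e j := by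
      rw [ha, ← Finset.add_sum_erase _ _ (Finset.mem_univ i)]
      abel
    rw [h]; exact AddSubmonoid.sum_mem _ (fun j _ => hea j)
  have hnegA : -a ∉ (S : Set (Fin d → ℤ)) := by
    intro h
    apply hne
    have hneg : ∀ x ∈ S, -x ∈ S := by
      have h1 : AddSubmonoid.closure (Set.range e) ≤
          AddSubmonoid.comap (AddMonoidHom.mk' (fun y : Fin d → ℤ => -y)
            (fun u v => neg_add u v)) S := by
        rw [AddSubmonoid.closure_le]
        rintro _ ⟨i, rfl⟩
        show -(e i) ∈ S
        have := S.add_mem (haei i) h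
        have heq : a - e i + -a = -(e i) := by ring
        rwa [heq] at this
      intro x hx
      have h2 : S ≤ AddSubmonoid.comap (AddMonoidHom.mk' (fun y : Fin d → ℤ => -y)
          (fun u v => neg_add u v)) S := hgen ▸ h1
      exact h2 hx
    apply Set.eq_univ_iff_forall.mpr
    intro x
    obtain ⟨s, hs, t, ht, rfl⟩ := hgrp x
    rw [sub_eq_add_neg]
    exact S.add_mem hs (hneg t ht)
  have hB : ∀ t ∈ S, ∃ n : ℕ, n • a - t ∈ S := by
    intro t ht
    rw [hgen] at ht
    induction ht using AddSubmonoid.closure_induction with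
    | mem x hx =>
      obtain ⟨i, rfl⟩ := hx
      exact ⟨1, by rw [one_nsmul]; exact haei i⟩
    | zero => exact ⟨0, by simpa using S.zero_mem⟩
    | add x y hx hy ihx ihy =>
      obtain ⟨n1, h1⟩ := ihx
      obtain ⟨n2, h2⟩ := ihy
      refine ⟨n1 + n2, ?_⟩
      have := S.add_mem h1 h2
      have heq : n1 • a - x + (n2 • a - y) = (n1 + n2) • a - (x + y) := by
        rw [add_nsmul]; abel
      rwa [heq] at this
  have hmono : ∀ p q : ℕ, p ≤ q →
      (fun s => s + q • a) '' (S : Set (Fin d → ℤ)) ⊆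
        (fun s => s + p • a) '' (S : Set (Fin d → ℤ)) := by
    intro p q hpq x hx
    obtain ⟨s, hs, rfl⟩ := hx
    obtain ⟨c, rfl⟩ := Nat.exists_eq_add_of_le hpq
    refine ⟨s + c • a, S.add_mem hs (AddSubmonoid.nsmul_mem S haS c), ?_⟩
    show s + c • a + p • a = s + (p + c) • a
    rw [add_nsmul]; abel
  have hdisj : ∀ m n : ℕ, m < n → Disjoint (L m) (L n) := by
    intro m n hmn
    rw [Set.disjoint_left]
    intro x hxm hxn
    rw [hL] at hxm hxn
    exact hxm.2 (hmono (m + 1) n hmn hxn.1)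
  constructor
  · intro m n hmn
    rcases hmn.lt_or_gt with h | h
    · exact hdisj _ _ h
    · exact (hdisj _ _ h).symm
  intro k
  constructor
  · rw [hL]
    constructor
    · exact ⟨0, S.zero_mem, zero_add _⟩
    · rintro ⟨s, hs, hsx⟩
      apply hnegA
      have h1 : s = k • a - (k + 1) • a := eq_sub_of_add_eq hsx
      have h2 : k • a - (k + 1) • a = -a := by rw [succ_nsmul]; abel
      rw [h1, h2] at hs
      exact hs
  · ext x
    simp only [Set.mem_iUnion, Set.mem_setOf_eq, exists_prop]
    constructor
    · rintro ⟨s, hs, rfl⟩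
      by_contra hcon
      push_neg at hcon
      have hall : ∀ m, k ≤ m → s + k • a ∈ (fun s => s + m • a) '' (S : Set (Fin d → ℤ)) := by
        intro m hm
        induction m, hm using Nat.le_induction with
        | base => exact ⟨s, hs, rfl⟩
        | succ m hm ih =>
          by_contra hnot
          exact hcon m hm (by rw [hL]; exact ⟨ih, hnot⟩)
      obtain ⟨n, hn⟩ := hB s hs
      obtain ⟨s', hs', heq⟩ := hall (k + n + 1) (by omega)
      refine absurd ?_ hnegA
      have hmem := S.add_mem hs' hn
      have h1 : s' = s + k • a - (k + n + 1) • a := eq_sub_of_add_eq heq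
      have h2 : s' + (n • a - s) = -a := by
        rw [h1, add_nsmul, add_nsmul, one_nsmul]; abel
      rwa [h2] at hmem
    · rintro ⟨m, hm, hxm⟩
      rw [hL] at hxm
      exact hmono k m hm hxm.1
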